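/- For $|q|<1$ and any nonnegative integer $c$, the identity $\sum_{m=0}^\infty q^m \frac{(q;q)_{2m+c}}{(q;q)_{m+c}(q;q)_m} = \frac{1}{(q;q)_\infty}\sum_{k=0}^\infty (-1)^k q^{\frac{3}{2}k^2 + (c+\frac{3}{2})k}$ holds. -/

import Mathlib

/-- The q-Pochhammer symbol `(q; q)_n`. -/
def qPoch (q : ℂ) (n : ℕ) : ℂ := ∏ j ∈ Finset.range n, (1 - q ^ (j + 1))

namespace FineAux

lemma qPoch_zero (q : ℂ) : qPoch q 0 = 1 := Finset.prod_range_zero _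

lemma qPoch_succ (q : ℂ) (n : ℕ) : qPoch q (n + 1) = qPoch q n * (1 - q ^ (n + 1)) :=
  Finset.prod_range_succ _ _

lemma factor_ne {q : ℂ} (hq : ‖q‖ < 1) (n : ℕ) : (1 - q ^ (n + 1)) ≠ 0 := by
  intro h
  have h1 : q ^ (n + 1) = 1 := by
    have := sub_eq_zero.mp h; linear_combination -this
  have : ‖q ^ (n + 1)‖ < 1 := by
    rw [norm_pow]
    exact pow_lt_one₀ (norm_nonneg q) hq (Nat.succ_ne_zero n)
  rw [h1, norm_one] at this; exact lt_irrefl _ this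

lemma qPoch_ne {q : ℂ} (hq : ‖q‖ < 1) (n : ℕ) : qPoch q n ≠ 0 :=
  Finset.prod_ne_zero_iff.mpr fun j _ => factor_ne hq j

lemma qPoch_prod_add (q : ℂ) (n k : ℕ) :
    qPoch q (n + k) = qPoch q n * ∏ i ∈ Finset.range k, (1 - q ^ (n + 1 + i)) := by
  rw [qPoch, Finset.prod_range_add]
  congr 1
  exact Finset.prod_congr rfl fun i _ => by ring_nf

/-- geometric partial sums bound -/
lemma sum_pow_le {r : ℝ} (h0 : 0 ≤ r) (h1 : r < 1) (n c : ℕ) :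
    ∑ j ∈ Finset.range n, r ^ (c + j) ≤ r ^ c / (1 - r) := by
  have hsum : Summable (fun j : ℕ => r ^ (c + j)) := by
    simpa [pow_add] using (summable_geometric_of_lt_one h0 h1).mul_left (r ^ c)
  calc ∑ j ∈ Finset.range n, r ^ (c + j) ≤ ∑' j : ℕ, r ^ (c + j) :=
        Summable.sum_le_tsum _ (fun i _ => by positivity) hsum
    _ = r ^ c * (1 - r)⁻¹ := by
        simp only [pow_add]
        rw [tsum_mul_left, tsum_geometric_of_lt_one h0 h1]
    _ = r ^ c / (1 - r) := by rw [div_eq_mul_inv]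

/-- pointwise lower bound: for `0 ≤ x ≤ r < 1`, `exp (-(x/(1-r))) ≤ 1 - x`. -/
lemma exp_le_one_sub {x r : ℝ} (hx0 : 0 ≤ x) (hxr : x ≤ r) (hr : r < 1) :
    Real.exp (-(x / (1 - r))) ≤ 1 - x := by
  have hr1 : 0 < 1 - r := by linarith
  have h1 : 1 + x / (1 - r) ≤ Real.exp (x / (1 - r)) := by
    have := Real.add_one_le_exp (x / (1 - r)); linarith
  have h2 : (1 : ℝ) ≤ (1 + x / (1 - r)) * (1 - x) := by
    have : x * (1 - x) ≥ x * (1 - r) := by nlinarith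
    have hq : x / (1 - r) * (1 - x) ≥ x := by
      rw [ge_iff_le, div_mul_eq_mul_div, le_div_iff₀ hr1]; nlinarith
    nlinarith
  have h3 : (1 : ℝ) ≤ Real.exp (x / (1 - r)) * (1 - x) := by
    nlinarith [Real.exp_pos (x / (1 - r))]
  rw [Real.exp_neg, inv_le_iff_one_le_mul₀ (Real.exp_pos _)]
  linarith [h3]

end FineAux

namespace FineAux2
open FineAux

variable {q : ℂ}

noncomputable def U (q : ℂ) : ℝ := Real.exp (‖q‖ / (1 - ‖q‖))
noncomputable def L (q : ℂ) : ℝ := Real.exp (-(‖q‖ / ((1 - ‖q‖) * (1 - ‖q‖))))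

lemma L_pos (q : ℂ) : 0 < L q := Real.exp_pos _
lemma U_pos (q : ℂ) : 0 < U q := Real.exp_pos _

/-- upper bound for products of `(1 + xᵢ)`-type factors -/
lemma norm_prod_le_exp {ι : Type*} (t : Finset ι) (x : ι → ℂ) :
    ‖∏ i ∈ t, (1 + x i)‖ ≤ Real.exp (∑ i ∈ t, ‖x i‖) := by
  rw [norm_prod]
  calc ∏ i ∈ t, ‖1 + x i‖ ≤ ∏ i ∈ t, Real.exp ‖x i‖ := by
        apply Finset.prod_le_prod (fun i _ => norm_nonneg _) (fun i _ => ?_)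
        calc ‖1 + x i‖ ≤ ‖(1:ℂ)‖ + ‖x i‖ := norm_add_le _ _
          _ = ‖x i‖ + 1 := by rw [norm_one]; ring
          _ ≤ Real.exp ‖x i‖ := Real.add_one_le_exp _
    _ = Real.exp (∑ i ∈ t, ‖x i‖) := (Real.exp_sum _ _).symm

/-- `‖∏ (1 + xᵢ) - 1‖ ≤ exp (∑ ‖xᵢ‖) - 1`. -/
lemma norm_prod_sub_one_le {ι : Type*} (t : Finset ι) (x : ι → ℂ) :
    ‖∏ i ∈ t, (1 + x i) - 1‖ ≤ Real.exp (∑ i ∈ t, ‖x i‖) - 1 := by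
  classical
  induction t using Finset.induction_on with
  | empty => simp
  | @insert a s ha ih =>
    rw [Finset.prod_insert ha, Finset.sum_insert ha]
    have key : (1 + x a) * ∏ i ∈ s, (1 + x i) - 1
        = (1 + x a) * (∏ i ∈ s, (1 + x i) - 1) + x a := by ring
    rw [key]
    have h1 : ‖(1 + x a) * (∏ i ∈ s, (1 + x i) - 1) + x a‖
        ≤ (1 + ‖x a‖) * (Real.exp (∑ i ∈ s, ‖x i‖) - 1) + ‖x a‖ := by
      refine (norm_add_le _ _).trans (add_le_add ?_ le_rfl)
      rw [norm_mul]
      refine mul_le_mul ?_ ih (norm_nonneg _) (by positivity)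
      calc ‖1 + x a‖ ≤ ‖(1:ℂ)‖ + ‖x a‖ := norm_add_le _ _
        _ = 1 + ‖x a‖ := by rw [norm_one]
    refine h1.trans ?_
    have e1 : 1 + ‖x a‖ ≤ Real.exp ‖x a‖ := by
      have := Real.add_one_le_exp ‖x a‖; linarith
    have e2 : (1:ℝ) ≤ Real.exp (∑ i ∈ s, ‖x i‖) := by
      rw [Real.one_le_exp_iff]; positivity
    have e3 : Real.exp ‖x a‖ * Real.exp (∑ i ∈ s, ‖x i‖) = Real.exp (‖x a‖ + ∑ i ∈ s, ‖x i‖) :=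
      (Real.exp_add _ _).symm
    nlinarith [Real.exp_pos ‖x a‖, Real.exp_pos (∑ i ∈ s, ‖x i‖)]

lemma qPoch_norm_le (hq : ‖q‖ < 1) (n : ℕ) : ‖qPoch q n‖ ≤ U q := by
  have h := norm_prod_le_exp (Finset.range n) (fun j => -q ^ (j + 1))
  simp only [← sub_eq_add_neg, norm_neg] at h
  refine (by exact h : ‖qPoch q n‖ ≤ _).trans ?_
  rw [U]
  apply Real.exp_le_exp.mpr
  have := sum_pow_le (norm_nonneg q) hq n 1
  simp only [norm_pow]
  calc ∑ j ∈ Finset.range n, ‖q‖ ^ (j+1) = ∑ j ∈ Finset.range n, ‖q‖ ^ (1+j) := by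
        refine Finset.sum_congr rfl fun j _ => by rw [Nat.add_comm]
    _ ≤ ‖q‖ ^ 1 / (1 - ‖q‖) := sum_pow_le (norm_nonneg q) hq n 1
    _ = ‖q‖ / (1 - ‖q‖) := by rw [pow_one]

lemma qPoch_norm_ge (hq : ‖q‖ < 1) (n : ℕ) : L q ≤ ‖qPoch q n‖ := by
  have hr0 : (0:ℝ) ≤ ‖q‖ := norm_nonneg q
  have hr1 : (0:ℝ) < 1 - ‖q‖ := by linarith
  rw [qPoch, norm_prod]
  have step1 : ∏ j ∈ Finset.range n, Real.exp (-(‖q‖ ^ (j+1) / (1 - ‖q‖)))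
      ≤ ∏ j ∈ Finset.range n, ‖1 - q ^ (j + 1)‖ := by
    apply Finset.prod_le_prod (fun j _ => (Real.exp_pos _).le) (fun j _ => ?_)
    have h1 : ‖q ^ (j+1)‖ ≤ ‖q‖ := by
      rw [norm_pow]
      calc ‖q‖ ^ (j+1) ≤ ‖q‖ ^ 1 := pow_le_pow_of_le_one hr0 hq.le (by omega)
        _ = ‖q‖ := pow_one _
    have h2 : Real.exp (-(‖q ^ (j+1)‖ / (1 - ‖q‖))) ≤ 1 - ‖q ^ (j+1)‖ :=
      exp_le_one_sub (norm_nonneg _) h1 hq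
    have h3 : 1 - ‖q ^ (j+1)‖ ≤ ‖1 - q ^ (j+1)‖ := by
      have := norm_sub_norm_le (1:ℂ) (q ^ (j+1)); rw [norm_one] at this; linarith
    refine le_trans ?_ (h2.trans h3)
    rw [norm_pow]
  refine le_trans ?_ step1
  rw [← Real.exp_sum, L]
  apply Real.exp_le_exp.mpr
  rw [Finset.sum_neg_distrib, neg_le_neg_iff]
  calc ∑ j ∈ Finset.range n, ‖q‖ ^ (j+1) / (1 - ‖q‖)
        = (∑ j ∈ Finset.range n, ‖q‖ ^ (1+j)) / (1 - ‖q‖) := by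
          rw [Finset.sum_div]; exact Finset.sum_congr rfl fun j _ => by rw [Nat.add_comm]
    _ ≤ (‖q‖ ^ 1 / (1 - ‖q‖)) / (1 - ‖q‖) :=
        div_le_div_of_nonneg_right (sum_pow_le hr0 hq n 1) hr1.le
    _ = ‖q‖ / ((1 - ‖q‖) * (1 - ‖q‖)) := by rw [pow_one, div_div]

end FineAux2

namespace FineAux3
open FineAux FineAux2

variable {q : ℂ}

noncomputable def aT (q : ℂ) (c m : ℕ) : ℂ :=
  q ^ m * qPoch q (2 * m + c) / (qPoch q (m + c) * qPoch q m)
noncomputable def vT (q : ℂ) (c m : ℕ) : ℂ :=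
  q ^ (2 * m) * qPoch q (2 * m + c) / (qPoch q (m + c) * qPoch q m)
noncomputable def gT (q : ℂ) (c k : ℕ) : ℂ :=
  (-1 : ℂ) ^ k * q ^ ((3 * k ^ 2 + (2 * c + 3) * k) / 2)

lemma ratio_bound (hq : ‖q‖ < 1) (n b d : ℕ) :
    ‖qPoch q n / (qPoch q b * qPoch q d)‖ ≤ U q / (L q * L q) := by
  rw [norm_div, norm_mul]
  refine div_le_div₀ (U_pos q).le (qPoch_norm_le hq n) (mul_pos (L_pos q) (L_pos q)) ?_
  exact mul_le_mul (qPoch_norm_ge hq b) (qPoch_norm_ge hq d) (L_pos q).le (norm_nonneg _)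

lemma pow_norm_le (hq : ‖q‖ < 1) {a b : ℕ} (h : a ≤ b) : ‖q‖ ^ b ≤ ‖q‖ ^ a :=
  pow_le_pow_of_le_one (norm_nonneg q) hq.le h

lemma aT_bound (hq : ‖q‖ < 1) (c m : ℕ) :
    ‖aT q c m‖ ≤ (U q / (L q * L q)) * ‖q‖ ^ m := by
  rw [aT, mul_div_assoc, norm_mul, norm_pow, mul_comm]
  exact mul_le_mul_of_nonneg_right (ratio_bound hq _ _ _) (by positivity)

lemma vT_bound (hq : ‖q‖ < 1) (c m : ℕ) :
    ‖vT q c m‖ ≤ (U q / (L q * L q)) * ‖q‖ ^ m := by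
  rw [vT, mul_div_assoc, norm_mul, norm_pow, mul_comm]
  refine mul_le_mul (ratio_bound hq _ _ _) (pow_norm_le hq (by omega)) (by positivity) ?_
  exact (div_pos (U_pos q) (mul_pos (L_pos q) (L_pos q))).le

lemma two_e (c k : ℕ) : 2 * ((3 * k ^ 2 + (2 * c + 3) * k) / 2) = 3 * k ^ 2 + (2 * c + 3) * k := by
  rw [Nat.mul_div_cancel']
  rcases Nat.even_or_odd k with ⟨a, rfl⟩ | ⟨a, rfl⟩
  · exact ⟨6 * a ^ 2 + (2 * c + 3) * a, by ring⟩
  · exact ⟨6 * a ^ 2 + 9 * a + 2 * a * c + c + 3, by ring⟩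

lemma e_shift (c k : ℕ) :
    (3 * (k + 1) ^ 2 + (2 * c + 3) * (k + 1)) / 2
      = (3 * k ^ 2 + (2 * (c + 3) + 3) * k) / 2 + (c + 3) := by
  have h1 := two_e c (k + 1)
  have h2 := two_e (c + 3) k
  have h3 : 3 * (k + 1) ^ 2 + (2 * c + 3) * (k + 1)
      = (3 * k ^ 2 + (2 * (c + 3) + 3) * k) + 2 * (c + 3) := by ring
  have h1' := h1.trans h3
  generalize (3 * (k + 1) ^ 2 + (2 * c + 3) * (k + 1)) / 2 = A at h1' ⊢
  generalize hB : 3 * k ^ 2 + (2 * (c + 3) + 3) * k = B at h1' h2 ⊢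
  generalize B / 2 = A2 at h2 ⊢
  omega

lemma e_ge (c k : ℕ) : k ≤ (3 * k ^ 2 + (2 * c + 3) * k) / 2 := by
  have h := two_e c k
  have h2 : 2 * k ≤ 3 * k ^ 2 + (2 * c + 3) * k := by nlinarith
  generalize 3 * k ^ 2 + (2 * c + 3) * k = B at h h2
  omega

lemma e_ge' (c k : ℕ) : c + 1 + k ≤ (3 * (k+1) ^ 2 + (2 * c + 3) * (k+1)) / 2 := by
  have h := two_e c (k+1)
  have h2 : 2 * (c + 1 + k) ≤ 3 * (k+1) ^ 2 + (2 * c + 3) * (k+1) := by nlinarith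
  generalize 3 * (k+1) ^ 2 + (2 * c + 3) * (k+1) = B at h h2
  omega

lemma gT_bound (hq : ‖q‖ < 1) (c k : ℕ) : ‖gT q c k‖ ≤ 1 * ‖q‖ ^ k := by
  rw [gT, norm_mul, norm_pow, norm_pow, norm_neg, norm_one, one_pow, one_mul, one_mul]
  exact pow_norm_le hq (e_ge c k)

lemma gT_bound' (hq : ‖q‖ < 1) (c k : ℕ) : ‖gT q c (k + 1)‖ ≤ ‖q‖ ^ (c + 1) * ‖q‖ ^ k := by
  rw [gT, norm_mul, norm_pow, norm_pow, norm_neg, norm_one, one_pow, one_mul, ← pow_add]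
  exact pow_norm_le hq (e_ge' c k)

lemma summable_of_bound (hq : ‖q‖ < 1) (f : ℕ → ℂ) (C : ℝ)
    (h : ∀ m, ‖f m‖ ≤ C * ‖q‖ ^ m) : Summable f :=
  Summable.of_norm_bounded ((summable_geometric_of_lt_one (norm_nonneg q) hq).mul_left C) h

lemma tsum_norm_le (hq : ‖q‖ < 1) (f : ℕ → ℂ) (C : ℝ)
    (h : ∀ m, ‖f m‖ ≤ C * ‖q‖ ^ m) : ‖∑' m, f m‖ ≤ C / (1 - ‖q‖) := by
  have hgeo := (summable_geometric_of_lt_one (norm_nonneg q) hq).mul_left C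
  have hnorm : Summable (fun m => ‖f m‖) :=
    Summable.of_nonneg_of_le (fun m => norm_nonneg _) h hgeo
  refine (norm_tsum_le_tsum_norm hnorm).trans ?_
  calc ∑' m, ‖f m‖ ≤ ∑' m : ℕ, C * ‖q‖ ^ m := Summable.tsum_le_tsum h hnorm hgeo
    _ = C * (1 - ‖q‖)⁻¹ := by
        rw [tsum_mul_left, tsum_geometric_of_lt_one (norm_nonneg q) hq]
    _ = C / (1 - ‖q‖) := (div_eq_mul_inv _ _).symm

lemma summable_aT (hq : ‖q‖ < 1) (c : ℕ) : Summable (aT q c) :=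
  summable_of_bound hq _ _ (aT_bound hq c)
lemma summable_vT (hq : ‖q‖ < 1) (c : ℕ) : Summable (vT q c) :=
  summable_of_bound hq _ _ (vT_bound hq c)
lemma summable_gT (hq : ‖q‖ < 1) (c : ℕ) : Summable (gT q c) :=
  summable_of_bound hq _ _ (gT_bound hq c)

end FineAux3

namespace FineAux4
open FineAux FineAux2 FineAux3

variable {q : ℂ}

lemma aT_zero (hq : ‖q‖ < 1) (c : ℕ) : aT q c 0 = 1 := by
  rw [aT]
  simp only [Nat.mul_zero, Nat.zero_add, Nat.add_zero, pow_zero, qPoch_zero, one_mul, mul_one]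
  exact div_self (qPoch_ne hq c)

lemma vT_zero (hq : ‖q‖ < 1) (c : ℕ) : vT q c 0 = 1 := by
  rw [vT]
  simp only [Nat.mul_zero, Nat.zero_add, Nat.add_zero, pow_zero, qPoch_zero, one_mul, mul_one]
  exact div_self (qPoch_ne hq c)

lemma T1 (hq : ‖q‖ < 1) (c m : ℕ) :
    aT q (c + 1) (m + 1) - aT q c (m + 1) = q ^ (c + 3) * vT q (c + 2) m := by
  rw [aT, aT, vT]
  rw [show 2 * (m + 1) + (c + 1) = (2 * m + c + 2) + 1 by ring]
  rw [show (m + 1) + (c + 1) = (m + c + 1) + 1 by ring]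
  rw [show 2 * (m + 1) + c = 2 * m + c + 2 by ring]
  rw [show (m + 1) + c = m + c + 1 by ring]
  rw [show 2 * m + (c + 2) = 2 * m + c + 2 by ring]
  rw [show m + (c + 2) = (m + c + 1) + 1 by ring]
  rw [qPoch_succ q (2 * m + c + 2), qPoch_succ q (m + c + 1), qPoch_succ q m]
  have n1 : qPoch q (2 * m + c + 2) ≠ 0 := qPoch_ne hq _
  have n2 : qPoch q (m + c + 1) ≠ 0 := qPoch_ne hq _
  have n3 : qPoch q m ≠ 0 := qPoch_ne hq _
  have f1 : (1 - q ^ (2 * m + c + 2 + 1)) ≠ 0 := factor_ne hq _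
  have f2 : (1 - q ^ (m + c + 1 + 1)) ≠ 0 := factor_ne hq _
  have f3 : (1 - q ^ (m + 1)) ≠ 0 := factor_ne hq _
  field_simp
  ring

lemma T2 (hq : ‖q‖ < 1) (c m : ℕ) :
    aT q (c + 1) (m + 1) - vT q c (m + 1) = q * aT q (c + 2) m := by
  rw [aT, aT, vT]
  rw [show 2 * (m + 1) + (c + 1) = (2 * m + c + 2) + 1 by ring]
  rw [show (m + 1) + (c + 1) = (m + c + 1) + 1 by ring]
  rw [show 2 * (m + 1) + c = 2 * m + c + 2 by ring]
  rw [show (m + 1) + c = m + c + 1 by ring]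
  rw [show 2 * m + (c + 2) = 2 * m + c + 2 by ring]
  rw [show m + (c + 2) = (m + c + 1) + 1 by ring]
  rw [qPoch_succ q (2 * m + c + 2), qPoch_succ q (m + c + 1), qPoch_succ q m]
  have n1 : qPoch q (2 * m + c + 2) ≠ 0 := qPoch_ne hq _
  have n2 : qPoch q (m + c + 1) ≠ 0 := qPoch_ne hq _
  have n3 : qPoch q m ≠ 0 := qPoch_ne hq _
  have f1 : (1 - q ^ (2 * m + c + 2 + 1)) ≠ 0 := factor_ne hq _
  have f2 : (1 - q ^ (m + c + 1 + 1)) ≠ 0 := factor_ne hq _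
  have f3 : (1 - q ^ (m + 1)) ≠ 0 := factor_ne hq _
  field_simp
  ring

lemma T3 (c k : ℕ) :
    gT q (c + 1) (k + 1) - gT q c (k + 1)
      = q ^ (c + 3) * (gT q (c + 3) k - q * gT q (c + 4) k) := by
  rw [gT, gT, gT, gT]
  rw [show (3 * (k+1) ^ 2 + (2 * (c+1) + 3) * (k+1)) / 2
      = (3 * k ^ 2 + (2 * ((c+1)+3) + 3) * k) / 2 + ((c+1) + 3) from e_shift (c+1) k]
  rw [show (3 * (k+1) ^ 2 + (2 * c + 3) * (k+1)) / 2
      = (3 * k ^ 2 + (2 * (c+3) + 3) * k) / 2 + (c + 3) from e_shift c k]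
  rw [show 2 * ((c+1)+3) + 3 = 2 * (c + 4) + 3 by ring]
  rw [show (c+1) + 3 = c + 4 by ring]
  rw [pow_add, pow_add, pow_succ]
  ring

-- tsum level sums
noncomputable def Sq (q : ℂ) (c : ℕ) : ℂ := ∑' m, aT q c m
noncomputable def Vq (q : ℂ) (c : ℕ) : ℂ := ∑' m, vT q c m
noncomputable def Gq (q : ℂ) (c : ℕ) : ℂ := ∑' k, gT q c k

lemma L1 (hq : ‖q‖ < 1) (c : ℕ) : Sq q (c + 1) - Sq q c = q ^ (c + 3) * Vq q (c + 2) := by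
  have ha1 := summable_aT hq (c + 1)
  have ha0 := summable_aT hq c
  have hd : Summable (fun m => aT q (c + 1) m - aT q c m) := ha1.sub ha0
  rw [Sq, Sq, ← Summable.tsum_sub ha1 ha0, Summable.tsum_eq_zero_add hd]
  have h0 : aT q (c + 1) 0 - aT q c 0 = 0 := by rw [aT_zero hq, aT_zero hq, sub_self]
  rw [h0, zero_add]
  calc ∑' m, (aT q (c + 1) (m + 1) - aT q c (m + 1))
      = ∑' m, q ^ (c + 3) * vT q (c + 2) m := by
        exact tsum_congr fun m => T1 hq c m
    _ = q ^ (c + 3) * Vq q (c + 2) := tsum_mul_left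

lemma L2 (hq : ‖q‖ < 1) (c : ℕ) : Vq q c = Sq q (c + 1) - q * Sq q (c + 2) := by
  have ha1 := summable_aT hq (c + 1)
  have hv := summable_vT hq c
  have hw : Summable (fun m => aT q (c + 1) m - vT q c m) := ha1.sub hv
  have key : ∑' m, (aT q (c + 1) m - vT q c m) = q * Sq q (c + 2) := by
    rw [Summable.tsum_eq_zero_add hw]
    have h0 : aT q (c + 1) 0 - vT q c 0 = 0 := by rw [aT_zero hq, vT_zero hq, sub_self]
    rw [h0, zero_add]
    calc ∑' m, (aT q (c + 1) (m + 1) - vT q c (m + 1))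
        = ∑' m, q * aT q (c + 2) m := tsum_congr fun m => T2 hq c m
      _ = q * Sq q (c + 2) := tsum_mul_left
  rw [Summable.tsum_sub ha1 hv] at key
  have : Sq q (c + 1) - Vq q c = q * Sq q (c + 2) := key
  linear_combination -this

lemma L3 (hq : ‖q‖ < 1) (c : ℕ) :
    Gq q (c + 1) - Gq q c = q ^ (c + 3) * (Gq q (c + 3) - q * Gq q (c + 4)) := by
  have hg1 := summable_gT hq (c + 1)
  have hg0 := summable_gT hq c
  have hd : Summable (fun k => gT q (c + 1) k - gT q c k) := hg1.sub hg0
  rw [Gq, Gq, ← Summable.tsum_sub hg1 hg0, Summable.tsum_eq_zero_add hd]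
  have h0 : gT q (c + 1) 0 - gT q c 0 = 0 := by
    rw [gT, gT]; norm_num
  rw [h0, zero_add]
  calc ∑' k, (gT q (c + 1) (k + 1) - gT q c (k + 1))
      = ∑' k, q ^ (c + 3) * (gT q (c + 3) k - q * gT q (c + 4) k) :=
        tsum_congr fun k => T3 c k
    _ = q ^ (c + 3) * ∑' k, (gT q (c + 3) k - q * gT q (c + 4) k) := tsum_mul_left
    _ = q ^ (c + 3) * (Gq q (c + 3) - q * Gq q (c + 4)) := by
        rw [Summable.tsum_sub (summable_gT hq (c + 3)) ((summable_gT hq (c + 4)).mul_left q),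
          tsum_mul_left]
        rfl

/-- main algebraic recurrence for `S`. -/
lemma L4 (hq : ‖q‖ < 1) (c : ℕ) :
    Sq q (c + 1) - Sq q c = q ^ (c + 3) * (Sq q (c + 3) - q * Sq q (c + 4)) := by
  have h1 := L1 hq c
  have h2 := L2 hq (c + 2)
  rw [show c + 2 + 1 = c + 3 by ring, show c + 2 + 2 = c + 4 by ring] at h2
  rw [h1, h2]

end FineAux4

namespace FineAux5
open FineAux FineAux2 FineAux3 FineAux4

variable {q : ℂ}

noncomputable def Fz (q z : ℂ) : ℂ := ∑' m, z ^ m / qPoch q m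

lemma F_term_bound (hq : ‖q‖ < 1) (z : ℂ) (m : ℕ) :
    ‖z ^ m / qPoch q m‖ ≤ (1 / L q) * ‖z‖ ^ m := by
  rw [norm_div, norm_pow]
  rw [div_eq_mul_inv, mul_comm, one_div]
  refine mul_le_mul_of_nonneg_right ?_ (by positivity)
  exact inv_anti₀ (L_pos q) (qPoch_norm_ge hq m)

lemma summable_F (hq : ‖q‖ < 1) {z : ℂ} (hz : ‖z‖ < 1) :
    Summable (fun m => z ^ m / qPoch q m) :=
  Summable.of_norm_bounded
    ((summable_geometric_of_lt_one (norm_nonneg z) hz).mul_left (1 / L q))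
    (F_term_bound hq z)

lemma func_eq (hq : ‖q‖ < 1) {z : ℂ} (hz : ‖z‖ < 1) :
    Fz q z * (1 - z) = Fz q (z * q) := by
  have hzq : ‖z * q‖ < 1 := by
    rw [norm_mul]
    calc ‖z‖ * ‖q‖ ≤ 1 * ‖q‖ := mul_le_mul_of_nonneg_right hz.le (norm_nonneg q)
      _ = ‖q‖ := one_mul _
      _ < 1 := hq
  have h1 := summable_F hq hz
  have h2 := summable_F (z := z * q) hq hzq
  have hd : Summable (fun m => z ^ m / qPoch q m - (z * q) ^ m / qPoch q m) := h1.sub h2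
  have key : Fz q z - Fz q (z * q) = z * Fz q z := by
    rw [Fz, Fz, ← Summable.tsum_sub h1 h2, Summable.tsum_eq_zero_add hd]
    have h0 : z ^ 0 / qPoch q 0 - (z * q) ^ 0 / qPoch q 0 = 0 := by
      simp [qPoch_zero]
    rw [h0, zero_add]
    calc ∑' m, (z ^ (m+1) / qPoch q (m+1) - (z * q) ^ (m+1) / qPoch q (m+1))
        = ∑' m, z * (z ^ m / qPoch q m) := by
          refine tsum_congr fun m => ?_
          rw [qPoch_succ]
          have n1 : qPoch q m ≠ 0 := qPoch_ne hq m
          have f1 : (1 - q ^ (m + 1)) ≠ 0 := factor_ne hq m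
          field_simp
          ring
      _ = z * Fz q z := tsum_mul_left
  linear_combination key

lemma norm_q_pow_lt (hq : ‖q‖ < 1) (N : ℕ) : ‖q ^ (N + 1)‖ < 1 := by
  rw [norm_pow]; exact pow_lt_one₀ (norm_nonneg q) hq (Nat.succ_ne_zero N)

lemma key_prod (hq : ‖q‖ < 1) (N : ℕ) : Fz q q * qPoch q N = Fz q (q ^ (N + 1)) := by
  induction N with
  | zero => rw [qPoch_zero, mul_one, pow_one]
  | succ n ih =>
    rw [qPoch_succ, ← mul_assoc, ih]
    have := func_eq hq (norm_q_pow_lt hq n)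
    rw [this, ← pow_succ]

lemma F_near_one (hq : ‖q‖ < 1) {w : ℂ} (hw : ‖w‖ ≤ ‖q‖) :
    ‖Fz q w - 1‖ ≤ (‖w‖ * (1 / L q)) / (1 - ‖q‖) := by
  have hw1 : ‖w‖ < 1 := lt_of_le_of_lt hw hq
  have hs := summable_F hq hw1
  have key : Fz q w - 1 = ∑' m, w ^ (m + 1) / qPoch q (m + 1) := by
    rw [Fz, Summable.tsum_eq_zero_add hs]
    simp [qPoch_zero]
  rw [key]
  refine tsum_norm_le hq _ _ fun m => ?_
  calc ‖w ^ (m+1) / qPoch q (m+1)‖ ≤ (1 / L q) * ‖w‖ ^ (m + 1) :=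
        F_term_bound hq w (m+1)
    _ = (‖w‖ * (1 / L q)) * ‖w‖ ^ m := by ring
    _ ≤ (‖w‖ * (1 / L q)) * ‖q‖ ^ m := by
        refine mul_le_mul_of_nonneg_left (pow_le_pow_left₀ (norm_nonneg w) hw m) ?_
        exact mul_nonneg (norm_nonneg w) (div_pos one_pos (L_pos q)).le

end FineAux5

namespace FineAux6
open FineAux FineAux2 FineAux3 FineAux4 FineAux5

variable {q : ℂ}

lemma tail_sum_le (hq : ‖q‖ < 1) (n : ℕ) (t : Finset ℕ) (ht : ∀ j ∈ t, n ≤ j) :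
    ∑ j ∈ t, ‖q‖ ^ (j + 1) ≤ ‖q‖ ^ (n + 1) / (1 - ‖q‖) := by
  have h0 : (0:ℝ) ≤ ‖q‖ := norm_nonneg q
  have step1 : ∑ j ∈ t, ‖q‖ ^ (j + 1) = ∑ j ∈ t, ‖q‖ ^ (n + 1) * ‖q‖ ^ (j - n) := by
    refine Finset.sum_congr rfl fun j hj => ?_
    rw [← pow_add]
    congr 1
    have := ht j hj; omega
  rw [step1, ← Finset.mul_sum]
  have step2 : ∑ j ∈ t, ‖q‖ ^ (j - n) = ∑ i ∈ t.image (· - n), ‖q‖ ^ i := by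
    rw [Finset.sum_image]
    intro a ha b hb hab
    have := ht a ha; have := ht b hb; simp only at hab; omega
  have step3 : ∑ i ∈ t.image (· - n), ‖q‖ ^ i ≤ (1 - ‖q‖)⁻¹ := by
    rw [← tsum_geometric_of_lt_one h0 hq]
    exact Summable.sum_le_tsum _ (fun i _ => by positivity) (summable_geometric_of_lt_one h0 hq)
  rw [div_eq_mul_inv]
  refine mul_le_mul_of_nonneg_left ?_ (by positivity)
  rw [step2]; exact step3

noncomputable def beta (q : ℂ) (n : ℕ) : ℝ :=
  U q * (Real.exp (‖q‖ ^ (n + 1) / (1 - ‖q‖)) - 1)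

lemma beta_tendsto (hq : ‖q‖ < 1) : Filter.Tendsto (beta q) Filter.atTop (nhds 0) := by
  have h0 : (0:ℝ) ≤ ‖q‖ := norm_nonneg q
  have h1 : Filter.Tendsto (fun n : ℕ => ‖q‖ ^ (n + 1)) Filter.atTop (nhds 0) := by
    have := (tendsto_pow_atTop_nhds_zero_of_lt_one h0 hq).const_mul ‖q‖
    simpa [pow_succ, mul_comm] using this
  have h2 : Filter.Tendsto (fun n : ℕ => ‖q‖ ^ (n + 1) / (1 - ‖q‖)) Filter.atTop (nhds 0) := by
    simpa using h1.div_const (1 - ‖q‖)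
  have h3 := (Real.continuous_exp.tendsto 0).comp h2
  rw [Real.exp_zero] at h3
  have h4 : Filter.Tendsto
      (fun n : ℕ => Real.exp (‖q‖ ^ (n + 1) / (1 - ‖q‖)) - 1) Filter.atTop (nhds 0) := by
    simpa using h3.sub_const 1
  have h5 := h4.const_mul (U q)
  rw [mul_zero] at h5
  exact h5

lemma prod_dist_le (hq : ‖q‖ < 1) (n : ℕ) (s : Finset ℕ) (hs : Finset.range n ⊆ s) :
    dist (∏ j ∈ s, (1 - q ^ (j + 1))) (qPoch q n) ≤ beta q n := by
  have hsplit : ∏ j ∈ s, (1 - q ^ (j + 1))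
      = (∏ j ∈ s \ Finset.range n, (1 - q ^ (j + 1))) * qPoch q n :=
    (Finset.prod_sdiff hs).symm
  rw [dist_eq_norm, hsplit]
  have hprod2 : ∏ j ∈ s \ Finset.range n, (1 - q ^ (j + 1))
      = ∏ j ∈ s \ Finset.range n, (1 + -q ^ (j + 1)) :=
    Finset.prod_congr rfl fun j _ => by ring
  have key : (∏ j ∈ s \ Finset.range n, (1 - q ^ (j + 1))) * qPoch q n - qPoch q n
      = qPoch q n * ((∏ j ∈ s \ Finset.range n, (1 + -q ^ (j + 1))) - 1) := by
    rw [hprod2]; ring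
  rw [key, norm_mul]
  have b1 : ‖(∏ j ∈ s \ Finset.range n, (1 + -q ^ (j + 1))) - 1‖
      ≤ Real.exp (∑ j ∈ s \ Finset.range n, ‖-q ^ (j + 1)‖) - 1 :=
    norm_prod_sub_one_le _ _
  have b2 : ∑ j ∈ s \ Finset.range n, ‖-q ^ (j + 1)‖ ≤ ‖q‖ ^ (n + 1) / (1 - ‖q‖) := by
    have : ∀ j ∈ s \ Finset.range n, n ≤ j := by
      intro j hj
      have := Finset.mem_sdiff.mp hj
      simpa using this.2
    calc ∑ j ∈ s \ Finset.range n, ‖-q ^ (j + 1)‖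
        = ∑ j ∈ s \ Finset.range n, ‖q‖ ^ (j + 1) := by
          refine Finset.sum_congr rfl fun j _ => by rw [norm_neg, norm_pow]
      _ ≤ ‖q‖ ^ (n + 1) / (1 - ‖q‖) := tail_sum_le hq n _ this
  calc ‖qPoch q n‖ * ‖(∏ j ∈ s \ Finset.range n, (1 + -q ^ (j + 1))) - 1‖
      ≤ U q * (Real.exp (‖q‖ ^ (n + 1) / (1 - ‖q‖)) - 1) := by
        refine mul_le_mul (qPoch_norm_le hq n) ?_ (norm_nonneg _) (U_pos q).le
        refine b1.trans ?_
        have := Real.exp_le_exp.mpr b2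
        linarith
    _ = beta q n := rfl

lemma qPoch_cauchy (hq : ‖q‖ < 1) : CauchySeq (qPoch q) := by
  refine cauchySeq_of_le_geometric ‖q‖ (U q * ‖q‖) hq fun n => ?_
  rw [dist_eq_norm, qPoch_succ]
  have : qPoch q n - qPoch q n * (1 - q ^ (n + 1)) = qPoch q n * q ^ (n + 1) := by ring
  rw [this, norm_mul, norm_pow]
  calc ‖qPoch q n‖ * ‖q‖ ^ (n + 1)
      ≤ U q * ‖q‖ ^ (n + 1) :=
        mul_le_mul_of_nonneg_right (qPoch_norm_le hq n) (by positivity)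
    _ = U q * ‖q‖ * ‖q‖ ^ n := by ring

lemma exists_hasProd (hq : ‖q‖ < 1) :
    ∃ P : ℂ, Filter.Tendsto (qPoch q) Filter.atTop (nhds P) ∧
      HasProd (fun j : ℕ => 1 - q ^ (j + 1)) P := by
  obtain ⟨P, hP⟩ := cauchySeq_tendsto_of_complete (qPoch_cauchy hq)
  refine ⟨P, hP, ?_⟩
  rw [HasProd, show (SummationFilter.unconditional ℕ).filter = Filter.atTop from rfl, Metric.tendsto_atTop]
  intro ε hε
  obtain ⟨n₀, hn₀⟩ := (Metric.tendsto_atTop.mp hP) (ε / 2) (by linarith)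
  obtain ⟨n₁, hn₁⟩ := (Metric.tendsto_atTop.mp (beta_tendsto hq)) (ε / 2) (by linarith)
  refine ⟨Finset.range (max n₀ n₁), fun s hs => ?_⟩
  have h1 : dist (∏ j ∈ s, (1 - q ^ (j + 1))) (qPoch q (max n₀ n₁)) ≤ beta q (max n₀ n₁) :=
    prod_dist_le hq _ s hs
  have h2 : dist (qPoch q (max n₀ n₁)) P < ε / 2 := hn₀ _ (le_max_left _ _)
  have h3 : beta q (max n₀ n₁) < ε / 2 := by
    have := hn₁ (max n₀ n₁) (le_max_right _ _)
    rw [Real.dist_eq] at this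
    have hb : 0 ≤ beta q (max n₀ n₁) := by
      rw [beta]
      have : (1:ℝ) ≤ Real.exp (‖q‖ ^ (max n₀ n₁ + 1) / (1 - ‖q‖)) := by
        rw [Real.one_le_exp_iff]
        have h0 : (0:ℝ) ≤ ‖q‖ := norm_nonneg q
        have h1r : (0:ℝ) < 1 - ‖q‖ := by linarith
        positivity
      nlinarith [U_pos q]
    rw [sub_zero, abs_of_nonneg hb] at this
    exact this
  calc dist (∏ j ∈ s, (1 - q ^ (j + 1))) P
      ≤ dist (∏ j ∈ s, (1 - q ^ (j + 1))) (qPoch q (max n₀ n₁))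
        + dist (qPoch q (max n₀ n₁)) P := dist_triangle _ _ _
    _ < ε / 2 + ε / 2 := by
        have := lt_of_le_of_lt h1 h3
        linarith
    _ = ε := by ring

lemma tendsto_qPoch_tprod (hq : ‖q‖ < 1) :
    Filter.Tendsto (qPoch q) Filter.atTop (nhds (∏' j : ℕ, (1 - q ^ (j + 1)))) := by
  obtain ⟨P, hP, hprod⟩ := exists_hasProd hq
  rw [hprod.tprod_eq]
  exact hP

lemma FPi (hq : ‖q‖ < 1) : Fz q q * (∏' j : ℕ, (1 - q ^ (j + 1))) = 1 := by
  have h1 : Filter.Tendsto (fun N => Fz q q * qPoch q N) Filter.atTop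
      (nhds (Fz q q * ∏' j : ℕ, (1 - q ^ (j + 1)))) :=
    (tendsto_qPoch_tprod hq).const_mul _
  have h2 : Filter.Tendsto (fun N => Fz q q * qPoch q N) Filter.atTop (nhds 1) := by
    have heq : (fun N => Fz q q * qPoch q N) = fun N => Fz q (q ^ (N + 1)) := by
      funext N; exact key_prod hq N
    rw [heq]
    have hfun : (fun N : ℕ => Fz q (q ^ (N + 1)))
        = fun N : ℕ => (Fz q (q ^ (N + 1)) - 1) + 1 := by
      funext N; ring
    rw [hfun, show (nhds (1:ℂ)) = nhds (0 + 1) by rw [zero_add]]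
    apply Filter.Tendsto.add_const
    apply squeeze_zero_norm (a := fun N => (‖q‖ ^ (N+1) * (1 / L q)) / (1 - ‖q‖))
    · intro N
      have := F_near_one hq (w := q ^ (N + 1)) (by
        rw [norm_pow]
        calc ‖q‖ ^ (N+1) ≤ ‖q‖ ^ 1 := pow_le_pow_of_le_one (norm_nonneg q) hq.le (by omega)
          _ = ‖q‖ := pow_one _)
      simpa [norm_pow] using this
    · have h0 : (0:ℝ) ≤ ‖q‖ := norm_nonneg q
      have h1' : Filter.Tendsto (fun N : ℕ => ‖q‖ ^ (N + 1)) Filter.atTop (nhds 0) := by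
        have := (tendsto_pow_atTop_nhds_zero_of_lt_one h0 hq).const_mul ‖q‖
        simpa [pow_succ, mul_comm] using this
      have := (h1'.mul_const (1 / L q)).div_const (1 - ‖q‖)
      simpa using this
  exact tendsto_nhds_unique h1 h2

end FineAux6

namespace FineAux7
open FineAux FineAux2 FineAux3 FineAux4 FineAux5 FineAux6

variable {q : ℂ}

lemma aT_split (hq : ‖q‖ < 1) (c m : ℕ) :
    aT q c m = q ^ m / qPoch q m * ∏ i ∈ Finset.range m, (1 - q ^ (m + c + 1 + i)) := by
  rw [aT, show 2 * m + c = (m + c) + m by ring, qPoch_prod_add q (m + c) m]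
  have n1 : qPoch q (m + c) ≠ 0 := qPoch_ne hq _
  have n2 : qPoch q m ≠ 0 := qPoch_ne hq _
  field_simp

lemma aT_diff_bound (hq : ‖q‖ < 1) (c m : ℕ) :
    ‖aT q c m - q ^ m / qPoch q m‖
      ≤ ((Real.exp (‖q‖ ^ (c + 1) / (1 - ‖q‖)) - 1) / L q) * ‖q‖ ^ m := by
  have h0 : (0:ℝ) ≤ ‖q‖ := norm_nonneg q
  have key : aT q c m - q ^ m / qPoch q m
      = q ^ m / qPoch q m * ((∏ i ∈ Finset.range m, (1 + -q ^ (m + c + 1 + i))) - 1) := by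
    rw [aT_split hq]
    have : ∏ i ∈ Finset.range m, (1 - q ^ (m + c + 1 + i))
        = ∏ i ∈ Finset.range m, (1 + -q ^ (m + c + 1 + i)) :=
      Finset.prod_congr rfl fun i _ => by ring
    rw [this]; ring
  rw [key, norm_mul]
  have b1 : ‖(∏ i ∈ Finset.range m, (1 + -q ^ (m + c + 1 + i))) - 1‖
      ≤ Real.exp (‖q‖ ^ (c + 1) / (1 - ‖q‖)) - 1 := by
    refine (norm_prod_sub_one_le _ _).trans ?_
    have hsum : ∑ i ∈ Finset.range m, ‖-q ^ (m + c + 1 + i)‖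
        ≤ ‖q‖ ^ (c + 1) / (1 - ‖q‖) := by
      calc ∑ i ∈ Finset.range m, ‖-q ^ (m + c + 1 + i)‖
          = ∑ i ∈ Finset.range m, ‖q‖ ^ (m + c + 1 + i) := by
            refine Finset.sum_congr rfl fun i _ => by rw [norm_neg, norm_pow]
        _ ≤ ∑ i ∈ Finset.range m, ‖q‖ ^ (c + 1 + i) := by
            refine Finset.sum_le_sum fun i _ => pow_norm_le hq (by omega)
        _ ≤ ‖q‖ ^ (c + 1) / (1 - ‖q‖) := sum_pow_le h0 hq m (c + 1)
    have := Real.exp_le_exp.mpr hsum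
    linarith
  calc ‖q ^ m / qPoch q m‖ * ‖(∏ i ∈ Finset.range m, (1 + -q ^ (m + c + 1 + i))) - 1‖
      ≤ (1 / L q) * ‖q‖ ^ m * (Real.exp (‖q‖ ^ (c + 1) / (1 - ‖q‖)) - 1) := by
        refine mul_le_mul (F_term_bound hq q m) b1 (norm_nonneg _) ?_
        have := F_term_bound hq q m
        have hn := norm_nonneg (q ^ m / qPoch q m)
        linarith
    _ = ((Real.exp (‖q‖ ^ (c + 1) / (1 - ‖q‖)) - 1) / L q) * ‖q‖ ^ m := by ring

lemma tendsto_S (hq : ‖q‖ < 1) :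
    Filter.Tendsto (Sq q) Filter.atTop (nhds (Fz q q)) := by
  have h0 : (0:ℝ) ≤ ‖q‖ := norm_nonneg q
  have hdiff : ∀ c : ℕ, ‖Sq q c - Fz q q‖
      ≤ ((Real.exp (‖q‖ ^ (c + 1) / (1 - ‖q‖)) - 1) / L q) / (1 - ‖q‖) := by
    intro c
    have hs1 := summable_aT hq c
    have hs2 := summable_F hq hq
    have : Sq q c - Fz q q = ∑' m, (aT q c m - q ^ m / qPoch q m) := by
      rw [Sq, Fz, Summable.tsum_sub hs1 hs2]
    rw [this]
    exact tsum_norm_le hq _ _ (aT_diff_bound hq c)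
  rw [← tendsto_sub_nhds_zero_iff]
  apply squeeze_zero_norm hdiff
  have h1 : Filter.Tendsto (fun c : ℕ => ‖q‖ ^ (c + 1)) Filter.atTop (nhds 0) := by
    have := (tendsto_pow_atTop_nhds_zero_of_lt_one h0 hq).const_mul ‖q‖
    simpa [pow_succ, mul_comm] using this
  have h1' : Filter.Tendsto (fun c : ℕ => ‖q‖ ^ (c + 1) / (1 - ‖q‖)) Filter.atTop (nhds 0) := by
    simpa using h1.div_const (1 - ‖q‖)
  have h2 := (Real.continuous_exp.tendsto 0).comp h1'
  rw [Real.exp_zero] at h2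
  have h3 := ((h2.sub_const 1).div_const (L q)).div_const (1 - ‖q‖)
  simpa using h3

lemma tendsto_G (hq : ‖q‖ < 1) :
    Filter.Tendsto (Gq q) Filter.atTop (nhds 1) := by
  have h0 : (0:ℝ) ≤ ‖q‖ := norm_nonneg q
  have hdiff : ∀ c : ℕ, ‖Gq q c - 1‖ ≤ ‖q‖ ^ (c + 1) / (1 - ‖q‖) := by
    intro c
    have hs := summable_gT hq c
    have key : Gq q c - 1 = ∑' k, gT q c (k + 1) := by
      rw [Gq, Summable.tsum_eq_zero_add hs]
      have : gT q c 0 = 1 := by rw [gT]; norm_num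
      rw [this]; ring
    rw [key]
    exact tsum_norm_le hq _ _ (gT_bound' hq c)
  rw [← tendsto_sub_nhds_zero_iff]
  apply squeeze_zero_norm hdiff
  have h1 : Filter.Tendsto (fun c : ℕ => ‖q‖ ^ (c + 1)) Filter.atTop (nhds 0) := by
    have := (tendsto_pow_atTop_nhds_zero_of_lt_one h0 hq).const_mul ‖q‖
    simpa [pow_succ, mul_comm] using this
  simpa using h1.div_const (1 - ‖q‖)

end FineAux7

namespace FineAux8
open FineAux FineAux2 FineAux3 FineAux4 FineAux5 FineAux6 FineAux7

variable {q : ℂ}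

noncomputable def Piq (q : ℂ) : ℂ := ∏' j : ℕ, (1 - q ^ (j + 1))

noncomputable def Ec (q : ℂ) (c : ℕ) : ℂ := Sq q c - (1 / Piq q) * Gq q c

lemma Erec (hq : ‖q‖ < 1) (c : ℕ) :
    Ec q (c + 1) - Ec q c = q ^ (c + 3) * (Ec q (c + 3) - q * Ec q (c + 4)) := by
  simp only [Ec]
  linear_combination (L4 hq c) - (1 / Piq q) * (L3 hq c)

lemma Ekey (hq : ‖q‖ < 1) (c : ℕ) :
    Ec q c = Ec q (c + 1) - q ^ (c + 3) * (Ec q (c + 3) - q * Ec q (c + 4)) := by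
  linear_combination - Erec hq c

lemma one_div_Piq (hq : ‖q‖ < 1) : 1 / Piq q = Fz q q := by
  have h : Fz q q * Piq q = 1 := FPi hq
  have hPi : Piq q ≠ 0 := by
    intro h0
    rw [h0, mul_zero] at h
    exact one_ne_zero h.symm
  rw [eq_comm, eq_div_iff hPi]
  exact h

lemma tendsto_E (hq : ‖q‖ < 1) : Filter.Tendsto (Ec q) Filter.atTop (nhds 0) := by
  have h1 : Filter.Tendsto (fun c => Sq q c - (1 / Piq q) * Gq q c) Filter.atTop
      (nhds (Fz q q - (1 / Piq q) * 1)) :=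
    (tendsto_S hq).sub ((tendsto_G hq).const_mul _)
  have : Fz q q - (1 / Piq q) * 1 = 0 := by
    rw [one_div_Piq hq]; ring
  rw [this] at h1
  exact h1

noncomputable def Mb (q : ℂ) : ℝ :=
  (U q / (L q * L q)) / (1 - ‖q‖) + ‖1 / Piq q‖ * (1 / (1 - ‖q‖))

lemma E_bound (hq : ‖q‖ < 1) (c : ℕ) : ‖Ec q c‖ ≤ Mb q := by
  have hS : ‖Sq q c‖ ≤ (U q / (L q * L q)) / (1 - ‖q‖) :=
    tsum_norm_le hq _ _ (aT_bound hq c)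
  have hG : ‖Gq q c‖ ≤ 1 / (1 - ‖q‖) := by
    have := tsum_norm_le hq _ _ (gT_bound hq c)
    simpa [Gq] using this
  calc ‖Ec q c‖ ≤ ‖Sq q c‖ + ‖(1 / Piq q) * Gq q c‖ := norm_sub_le _ _
    _ ≤ (U q / (L q * L q)) / (1 - ‖q‖) + ‖1 / Piq q‖ * (1 / (1 - ‖q‖)) := by
        rw [norm_mul]
        refine add_le_add hS (mul_le_mul_of_nonneg_left hG (norm_nonneg _))
    _ = Mb q := rfl

lemma telescope (hq : ‖q‖ < 1) (c N : ℕ) :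
    Ec q (c + N) - Ec q c
      = ∑ i ∈ Finset.range N, q ^ (c + i + 3) * (Ec q (c + i + 3) - q * Ec q (c + i + 4)) := by
  induction N with
  | zero => simp
  | succ n ih =>
    rw [Finset.sum_range_succ, ← ih]
    have h := Erec hq (c + n)
    have e1 : c + n + 1 = c + (n + 1) := by ring
    rw [e1] at h
    linear_combination h

set_option maxHeartbeats 1000000 in
lemma decay (hq : ‖q‖ < 1) (n : ℕ) (c : ℕ) :
    ‖Ec q c‖ ≤ Mb q * (2 / (1 - ‖q‖)) ^ n * (‖q‖ ^ c) ^ n := by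
  induction n generalizing c with
  | zero => simpa using E_bound hq c
  | succ n ih =>
    have h0 : (0:ℝ) ≤ ‖q‖ := norm_nonneg q
    have h1r : (0:ℝ) < 1 - ‖q‖ := by linarith
    set A := Mb q * (2 / (1 - ‖q‖)) ^ n with hA
    have hA0 : 0 ≤ A := by
      have hM : 0 ≤ Mb q := (norm_nonneg _).trans (E_bound hq 0)
      positivity
    -- bound each telescoping term
    have hterm : ∀ i : ℕ, ‖q ^ (c + i + 3) * (Ec q (c + i + 3) - q * Ec q (c + i + 4))‖
        ≤ 2 * A * (‖q‖ ^ c) ^ (n + 1) * ‖q‖ ^ i := by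
      intro i
      rw [norm_mul, norm_pow]
      have hb1 : ‖Ec q (c + i + 3) - q * Ec q (c + i + 4)‖
          ≤ 2 * A * (‖q‖ ^ (c + i + 3)) ^ n := by
        have b1 := ih (c + i + 3)
        have b2 := ih (c + i + 4)
        have b3 : ‖q * Ec q (c + i + 4)‖ ≤ A * (‖q‖ ^ (c + i + 3)) ^ n := by
          rw [norm_mul]
          have hpow : (‖q‖ ^ (c + i + 4)) ^ n ≤ (‖q‖ ^ (c + i + 3)) ^ n := by
            rw [← pow_mul, ← pow_mul]
            exact pow_norm_le hq (by nlinarith)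
          calc ‖q‖ * ‖Ec q (c + i + 4)‖ ≤ 1 * (A * (‖q‖ ^ (c + i + 4)) ^ n) :=
                mul_le_mul hq.le b2 (norm_nonneg _) zero_le_one
            _ = A * (‖q‖ ^ (c + i + 4)) ^ n := one_mul _
            _ ≤ A * (‖q‖ ^ (c + i + 3)) ^ n := mul_le_mul_of_nonneg_left hpow hA0
        calc ‖Ec q (c + i + 3) - q * Ec q (c + i + 4)‖
            ≤ ‖Ec q (c + i + 3)‖ + ‖q * Ec q (c + i + 4)‖ := norm_sub_le _ _
          _ ≤ A * (‖q‖ ^ (c + i + 3)) ^ n + A * (‖q‖ ^ (c + i + 3)) ^ n := add_le_add b1 b3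
          _ = 2 * A * (‖q‖ ^ (c + i + 3)) ^ n := by ring
      calc ‖q‖ ^ (c + i + 3) * ‖Ec q (c + i + 3) - q * Ec q (c + i + 4)‖
          ≤ ‖q‖ ^ (c + i + 3) * (2 * A * (‖q‖ ^ (c + i + 3)) ^ n) :=
            mul_le_mul_of_nonneg_left hb1 (by positivity)
        _ = 2 * A * (‖q‖ ^ (c + i + 3)) ^ (n + 1) := by ring
        _ ≤ 2 * A * ((‖q‖ ^ c) ^ (n + 1) * ‖q‖ ^ i) := by
            refine mul_le_mul_of_nonneg_left ?_ (by positivity)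
            rw [← pow_mul, ← pow_mul, ← pow_add]
            exact pow_norm_le hq (by nlinarith)
        _ = 2 * A * (‖q‖ ^ c) ^ (n + 1) * ‖q‖ ^ i := by ring
    -- bound the partial sums
    have hsum : ∀ N : ℕ,
        ‖Ec q c‖ ≤ ‖Ec q (c + N)‖ + 2 * A * (‖q‖ ^ c) ^ (n + 1) / (1 - ‖q‖) := by
      intro N
      have htel := telescope hq c N
      have : Ec q c = Ec q (c + N)
          - ∑ i ∈ Finset.range N, q ^ (c + i + 3) * (Ec q (c + i + 3) - q * Ec q (c + i + 4)) := by
        linear_combination -htel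
      rw [this]
      refine (norm_sub_le _ _).trans (add_le_add le_rfl ?_)
      refine (norm_sum_le _ _).trans ?_
      calc ∑ i ∈ Finset.range N, ‖q ^ (c + i + 3) * (Ec q (c + i + 3) - q * Ec q (c + i + 4))‖
          ≤ ∑ i ∈ Finset.range N, 2 * A * (‖q‖ ^ c) ^ (n + 1) * ‖q‖ ^ i :=
            Finset.sum_le_sum fun i _ => hterm i
        _ = 2 * A * (‖q‖ ^ c) ^ (n + 1) * ∑ i ∈ Finset.range N, ‖q‖ ^ i := by
            rw [Finset.mul_sum]
        _ ≤ 2 * A * (‖q‖ ^ c) ^ (n + 1) * (1 / (1 - ‖q‖)) := by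
            refine mul_le_mul_of_nonneg_left ?_ (by positivity)
            have := sum_pow_le h0 hq N 0
            simpa using this
        _ = 2 * A * (‖q‖ ^ c) ^ (n + 1) / (1 - ‖q‖) := by ring
    -- let N → ∞
    have hlim : Filter.Tendsto
        (fun N : ℕ => ‖Ec q (c + N)‖ + 2 * A * (‖q‖ ^ c) ^ (n + 1) / (1 - ‖q‖))
        Filter.atTop (nhds (0 + 2 * A * (‖q‖ ^ c) ^ (n + 1) / (1 - ‖q‖))) := by
      refine Filter.Tendsto.add_const _ ?_
      have h1 : Filter.Tendsto (fun N : ℕ => c + N) Filter.atTop Filter.atTop := by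
        simpa [Nat.add_comm] using Filter.tendsto_add_atTop_nat c
      have := ((tendsto_E hq).comp h1).norm
      simpa using this
    have final := ge_of_tendsto' hlim hsum
    calc ‖Ec q c‖ ≤ 0 + 2 * A * (‖q‖ ^ c) ^ (n + 1) / (1 - ‖q‖) := final
      _ = Mb q * (2 / (1 - ‖q‖)) ^ (n + 1) * (‖q‖ ^ c) ^ (n + 1) := by
          rw [hA]; ring

lemma vanish_ge (hq : ‖q‖ < 1) : ∃ C : ℕ, ∀ c : ℕ, C ≤ c → Ec q c = 0 := by
  have h0 : (0:ℝ) ≤ ‖q‖ := norm_nonneg q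
  have h1r : (0:ℝ) < 1 - ‖q‖ := by linarith
  have htt : Filter.Tendsto (fun c : ℕ => 2 / (1 - ‖q‖) * ‖q‖ ^ c) Filter.atTop (nhds 0) := by
    have := (tendsto_pow_atTop_nhds_zero_of_lt_one h0 hq).const_mul (2 / (1 - ‖q‖))
    simpa using this
  have hev : ∀ᶠ c : ℕ in Filter.atTop, 2 / (1 - ‖q‖) * ‖q‖ ^ c < 1 :=
    htt.eventually_lt_const (by norm_num)
  obtain ⟨C, hC⟩ := Filter.eventually_atTop.mp hev
  refine ⟨C, fun c hc => ?_⟩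
  set θ : ℝ := 2 / (1 - ‖q‖) * ‖q‖ ^ c with hθ
  have hθ0 : 0 ≤ θ := by positivity
  have hθ1 : θ < 1 := hC c hc
  have hle : ∀ n : ℕ, ‖Ec q c‖ ≤ Mb q * θ ^ n := by
    intro n
    have hd := decay hq n c
    calc ‖Ec q c‖ ≤ Mb q * (2 / (1 - ‖q‖)) ^ n * (‖q‖ ^ c) ^ n := hd
      _ = Mb q * θ ^ n := by rw [hθ, mul_pow, mul_assoc]
  have hlim2 : Filter.Tendsto (fun n : ℕ => Mb q * θ ^ n) Filter.atTop (nhds 0) := by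
    have := (tendsto_pow_atTop_nhds_zero_of_lt_one hθ0 hθ1).const_mul (Mb q)
    simpa using this
  have : ‖Ec q c‖ ≤ 0 := ge_of_tendsto' hlim2 hle
  simpa using le_antisymm this (norm_nonneg _)

lemma all_zero (hq : ‖q‖ < 1) (c : ℕ) : Ec q c = 0 := by
  obtain ⟨C, hC⟩ := vanish_ge hq
  have main : ∀ m : ℕ, ∀ c : ℕ, C ≤ c + m → Ec q c = 0 := by
    intro m
    induction m with
    | zero => intro c h; exact hC c (by omega)
    | succ n ih =>
      intro c h
      have h1 := ih (c + 1) (by omega)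
      have h3 := ih (c + 3) (by omega)
      have h4 := ih (c + 4) (by omega)
      rw [Ekey hq c, h1, h3, h4]
      ring
  exact main C c (by omega)

end FineAux8

/-- Fine's identity (25.96), specialized. -/
theorem fine_identity (q : ℂ) (hq : ‖q‖ < 1) (c : ℕ) :
    ∑' m : ℕ, q ^ m * qPoch q (2 * m + c) / (qPoch q (m + c) * qPoch q m) =
      (1 / ∏' j : ℕ, (1 - q ^ (j + 1))) *
        ∑' k : ℕ, (-1 : ℂ) ^ k * q ^ ((3 * k ^ 2 + (2 * c + 3) * k) / 2) := by
  have h := FineAux8.all_zero hq c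
  rw [FineAux8.Ec, sub_eq_zero] at h
  exact h
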